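/- arXiv:1809.05665 — 2 statements merged into one kernel-verified Lean document; each statement's English description precedes it below -/
import Mathlib

section
/- Let p > 0 and ω ∈ (−1,1). Suppose f : ℝ → ℝ is twice continuously differentiable with f ∈ L²(ℝ) and f' ∈ L²(ℝ), g ∈ L²(ℝ), and the pair (f,g) satisfies −f''(x) + f(x) − (p+1)·φ_ω(x)^p·f(x) + ω·g(x) = 0 and g(x) + ω·f(x) = 0 for all x ∈ ℝ (equivalently, (f,g) lies in the kernel of S_ω''(Φ_ω)). Then there exists a constant C ∈ ℝ such that f = C·φ_ω' and g = −C·ω·φ_ω'. -/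
open MeasureTheory Real Filter

/-- The explicit ground state `φ_ω` of `-φ'' + (1-ω²)φ = φ^{p+1}`. -/
noncomputable def phi (p ω : ℝ) : ℝ → ℝ := fun x =>
  ((p + 2) * (1 - ω ^ 2) / 2) ^ (1 / p) *
    Real.cosh (p / 2 * Real.sqrt (1 - ω ^ 2) * x) ^ (-(2 / p))

lemma hasDerivAt_cosh_rpow (b e x : ℝ) :
    HasDerivAt (fun x => Real.cosh (b*x) ^ e)
      (e * Real.cosh (b*x) ^ (e-1) * (Real.sinh (b*x) * b)) x := by
  have h1 : HasDerivAt (fun x : ℝ => b * x) b x := by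
    simpa using (hasDerivAt_id x).const_mul b
  have h2 : HasDerivAt (fun x => Real.cosh (b*x)) (Real.sinh (b*x) * b) x :=
    (Real.hasDerivAt_cosh (b*x)).comp x h1
  have := h2.rpow_const (p := e) (Or.inl (ne_of_gt (Real.cosh_pos (x := b*x))))
  convert this using 1; ring

section
variable (p ω : ℝ)

noncomputable def KA : ℝ := ((p + 2) * (1 - ω ^ 2) / 2) ^ (1 / p)
noncomputable def Kb : ℝ := p / 2 * Real.sqrt (1 - ω ^ 2)
noncomputable def Kc (p : ℝ) : ℝ := -(2 / p)

noncomputable def phi1 : ℝ → ℝ := fun x =>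
  KA p ω * Kb p ω * Kc p * Real.cosh (Kb p ω * x) ^ (Kc p - 1) * Real.sinh (Kb p ω * x)

noncomputable def phi2 : ℝ → ℝ := fun x =>
  KA p ω * Kb p ω ^ 2 * (Kc p ^ 2 * Real.cosh (Kb p ω * x) ^ (Kc p)
    - Kc p * (Kc p - 1) * Real.cosh (Kb p ω * x) ^ (Kc p - 2))

noncomputable def phi3 : ℝ → ℝ := fun x =>
  KA p ω * Kb p ω ^ 3 * (Kc p ^ 3 * Real.cosh (Kb p ω * x) ^ (Kc p - 1)
    - Kc p * (Kc p - 1) * (Kc p - 2) * Real.cosh (Kb p ω * x) ^ (Kc p - 3))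
    * Real.sinh (Kb p ω * x)

lemma homega (hω : ω ^ 2 < 1) : (0:ℝ) < 1 - ω ^ 2 := by linarith

lemma hA_pos (hp : 0 < p) (hω : ω ^ 2 < 1) : 0 < KA p ω := by
  have := homega ω hω
  apply Real.rpow_pos_of_pos
  nlinarith

lemma hb_pos (hp : 0 < p) (hω : ω ^ 2 < 1) : 0 < Kb p ω := by
  have := homega ω hω
  exact mul_pos (by linarith) (Real.sqrt_pos.mpr this)

lemma hc_neg (hp : 0 < p) : Kc p < 0 := by
  have : 0 < 2 / p := by positivity
  simp only [Kc]; linarith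

lemma hb_sq (hω : ω ^ 2 < 1) : Kb p ω ^ 2 = p ^ 2 * (1 - ω ^ 2) / 4 := by
  have := homega ω hω
  rw [Kb, mul_pow, sq_sqrt (by linarith : (0:ℝ) ≤ 1 - ω ^ 2)]
  ring

lemma hA_pow (hp : 0 < p) (hω : ω ^ 2 < 1) : KA p ω ^ p = (p + 2) * (1 - ω ^ 2) / 2 := by
  have h0 : (0:ℝ) ≤ (p + 2) * (1 - ω ^ 2) / 2 := by
    have := homega ω hω; nlinarith
  rw [KA, ← Real.rpow_mul h0, one_div, inv_mul_cancel₀ hp.ne', Real.rpow_one]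

end

section
variable (p ω : ℝ)

lemma rpow_mul_cosh (t e : ℝ) :
    Real.cosh t ^ (e - 1) * Real.cosh t = Real.cosh t ^ e := by
  rw [← Real.rpow_add_one (ne_of_gt (Real.cosh_pos (x := t)))]
  norm_num

lemma rpow_mul_sinh_sq (t e : ℝ) :
    Real.cosh t ^ (e - 2) * Real.sinh t ^ 2
      = Real.cosh t ^ e - Real.cosh t ^ (e - 2) := by
  have h := Real.cosh_sq t
  have h1 : Real.cosh t ^ (e - 2) * Real.cosh t * Real.cosh t = Real.cosh t ^ e := by
    have a1 := rpow_mul_cosh t (e - 1)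
    have a2 := rpow_mul_cosh t e
    rw [show e - 1 - 1 = e - 2 by ring] at a1
    rw [a1, a2]
  linear_combination h1 - (Real.cosh t ^ (e - 2)) * h

lemma hasDerivAt_phi (x : ℝ) : HasDerivAt (phi p ω) (phi1 p ω x) x := by
  have h := (hasDerivAt_cosh_rpow (Kb p ω) (Kc p) x).const_mul (KA p ω)
  convert h using 1
  · rfl
  · rfl
  · rfl
  simp only [phi1]; ring

lemma hasDerivAt_phi1 (x : ℝ) : HasDerivAt (phi1 p ω) (phi2 p ω x) x := by
  have h1 : HasDerivAt (fun x : ℝ => Kb p ω * x) (Kb p ω) x := by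
    simpa using (hasDerivAt_id x).const_mul (Kb p ω)
  have hS : HasDerivAt (fun x => Real.sinh (Kb p ω * x))
      (Real.cosh (Kb p ω * x) * Kb p ω) x :=
    (Real.hasDerivAt_sinh (Kb p ω * x)).comp x h1
  have h := ((hasDerivAt_cosh_rpow (Kb p ω) (Kc p - 1) x).mul hS).const_mul
    (KA p ω * Kb p ω * Kc p)
  have iA := rpow_mul_cosh (Kb p ω * x) (Kc p)
  have iB := rpow_mul_sinh_sq (Kb p ω * x) (Kc p)
  convert h using 1
  · rfl
  · rfl
  · ext y; simp only [phi1, Pi.mul_apply]; ring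
  simp only [phi2]
  rw [show Kc p - 1 - 1 = Kc p - 2 by ring]
  linear_combination (-(KA p ω * Kb p ω ^ 2 * Kc p * (Kc p - 1))) * iB
    - (KA p ω * Kb p ω ^ 2 * Kc p) * iA

lemma hasDerivAt_phi2 (x : ℝ) : HasDerivAt (phi2 p ω) (phi3 p ω x) x := by
  have h := ((hasDerivAt_cosh_rpow (Kb p ω) (Kc p) x).const_mul (Kc p ^ 2)).sub
    ((hasDerivAt_cosh_rpow (Kb p ω) (Kc p - 2) x).const_mul (Kc p * (Kc p - 1)))
  have h2 := h.const_mul (KA p ω * Kb p ω ^ 2)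
  convert h2 using 1
  · rfl
  · rfl
  · rfl
  simp only [phi3]
  rw [show Kc p - 2 - 1 = Kc p - 3 by ring]
  ring
end

noncomputable def qfun (p ω : ℝ) : ℝ → ℝ := fun x =>
  1 - ω ^ 2 - (p + 1) * (phi p ω x) ^ p

section
variable (p ω : ℝ)

lemma abs_sinh_le_cosh (t : ℝ) : |Real.sinh t| ≤ Real.cosh t := by
  have h := Real.cosh_sq t
  have h2 := Real.cosh_pos (x := t)
  refine abs_le.mpr ⟨by nlinarith [sq_nonneg (Real.sinh t + Real.cosh t)],
    by nlinarith [sq_nonneg (Real.sinh t - Real.cosh t)]⟩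

lemma cosh_rpow_pos (t e : ℝ) : 0 < Real.cosh t ^ e :=
  Real.rpow_pos_of_pos (Real.cosh_pos t) e

lemma cosh_rpow_le_one (t e : ℝ) (he : e ≤ 0) : Real.cosh t ^ e ≤ 1 :=
  Real.rpow_le_one_of_one_le_of_nonpos (Real.one_le_cosh t) he

lemma phi_eq (x : ℝ) : phi p ω x = KA p ω * Real.cosh (Kb p ω * x) ^ (Kc p) := rfl

lemma phi_rpow (hp : 0 < p) (hω : ω ^ 2 < 1) (x : ℝ) :
    (phi p ω x) ^ p = KA p ω ^ p * Real.cosh (Kb p ω * x) ^ (-2 : ℝ) := by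
  rw [phi_eq, Real.mul_rpow (le_of_lt (hA_pos p ω hp hω)) (le_of_lt (cosh_rpow_pos _ _)),
    ← Real.rpow_mul (le_of_lt (Real.cosh_pos (Kb p ω * x)))]
  rw [Kc, show -(2/p) * p = (-2:ℝ) by field_simp]

lemma id1 (hp : 0 < p) (hω : ω ^ 2 < 1) : Kb p ω ^ 2 * Kc p ^ 2 = 1 - ω ^ 2 := by
  rw [hb_sq p ω hω, Kc]
  field_simp
  ring

lemma id2 (hp : 0 < p) (hω : ω ^ 2 < 1) :
    Kb p ω ^ 2 * ((Kc p - 1) * (Kc p - 2)) = (p + 1) * KA p ω ^ p := by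
  rw [hb_sq p ω hω, hA_pow p ω hp hω, Kc]
  field_simp
  ring

lemma ode_phi1 (hp : 0 < p) (hω : ω ^ 2 < 1) (x : ℝ) :
    phi3 p ω x = qfun p ω x * phi1 p ω x := by
  have hZX : Real.cosh (Kb p ω * x) ^ (-2 : ℝ) * Real.cosh (Kb p ω * x) ^ (Kc p - 1)
      = Real.cosh (Kb p ω * x) ^ (Kc p - 3) := by
    rw [← Real.rpow_add (Real.cosh_pos (Kb p ω * x))]
    congr 1
    ring
  simp only [phi3, qfun, phi1, phi_rpow p ω hp hω]
  linear_combination (KA p ω * Kb p ω * Kc p * Real.sinh (Kb p ω * x)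
      * Real.cosh (Kb p ω * x) ^ (Kc p - 1)) * id1 p ω hp hω
    - (KA p ω * Kb p ω * Kc p * Real.sinh (Kb p ω * x)
      * Real.cosh (Kb p ω * x) ^ (Kc p - 3)) * id2 p ω hp hω
    + ((p + 1) * KA p ω ^ p * KA p ω * Kb p ω * Kc p * Real.sinh (Kb p ω * x)) * hZX

end

section
variable (p ω : ℝ)

lemma phi1_zero : phi1 p ω 0 = 0 := by simp [phi1]

lemma phi2_zero : phi2 p ω 0 = KA p ω * Kb p ω ^ 2 * Kc p := by
  simp only [phi2, mul_zero, Real.cosh_zero, Real.one_rpow]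
  ring

lemma phi2_zero_ne (hp : 0 < p) (hω : ω ^ 2 < 1) : phi2 p ω 0 ≠ 0 := by
  rw [phi2_zero]
  have h1 := hA_pos p ω hp hω
  have h2 := hb_pos p ω hp hω
  have h3 := hc_neg p hp
  intro h
  have := mul_neg_of_pos_of_neg (mul_pos h1 (pow_pos h2 2)) h3
  linarith

lemma phi1_bound (hp : 0 < p) (hω : ω ^ 2 < 1) (x : ℝ) :
    |phi1 p ω x| ≤ KA p ω * Kb p ω * (-Kc p) := by
  have h1 := hA_pos p ω hp hω
  have h2 := hb_pos p ω hp hω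
  have h3 := hc_neg p hp
  have hS := abs_sinh_le_cosh (Kb p ω * x)
  have hP := cosh_rpow_pos (Kb p ω * x) (Kc p - 1)
  have hPC : Real.cosh (Kb p ω * x) ^ (Kc p - 1) * Real.cosh (Kb p ω * x)
      = Real.cosh (Kb p ω * x) ^ (Kc p) := rpow_mul_cosh _ _
  have hle1 : Real.cosh (Kb p ω * x) ^ (Kc p) ≤ 1 :=
    cosh_rpow_le_one _ _ (le_of_lt h3)
  have habs : |phi1 p ω x| = KA p ω * Kb p ω * (-Kc p)
      * (Real.cosh (Kb p ω * x) ^ (Kc p - 1) * |Real.sinh (Kb p ω * x)|) := by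
    simp only [phi1, abs_mul, abs_of_pos h1, abs_of_pos h2, abs_of_neg h3,
      abs_of_pos hP]
    ring
  rw [habs]
  have : Real.cosh (Kb p ω * x) ^ (Kc p - 1) * |Real.sinh (Kb p ω * x)| ≤ 1 := by
    calc Real.cosh (Kb p ω * x) ^ (Kc p - 1) * |Real.sinh (Kb p ω * x)|
        ≤ Real.cosh (Kb p ω * x) ^ (Kc p - 1) * Real.cosh (Kb p ω * x) :=
          mul_le_mul_of_nonneg_left hS (le_of_lt hP)
      _ ≤ 1 := by rw [hPC]; exact hle1
  have hK : 0 ≤ KA p ω * Kb p ω * (-Kc p) := le_of_lt (mul_pos (mul_pos h1 h2) (by linarith))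
  exact mul_le_of_le_one_right hK this

lemma phi2_bound (hp : 0 < p) (hω : ω ^ 2 < 1) (x : ℝ) :
    |phi2 p ω x| ≤ KA p ω * Kb p ω ^ 2 * (Kc p ^ 2 + Kc p * (Kc p - 1)) := by
  have h1 := hA_pos p ω hp hω
  have h2 := hb_pos p ω hp hω
  have h3 := hc_neg p hp
  have hP0 := cosh_rpow_pos (Kb p ω * x) (Kc p)
  have hP2 := cosh_rpow_pos (Kb p ω * x) (Kc p - 2)
  have hle0 := cosh_rpow_le_one (Kb p ω * x) (Kc p) (le_of_lt h3)
  have hle2 := cosh_rpow_le_one (Kb p ω * x) (Kc p - 2) (by linarith)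
  have hcc : 0 < Kc p * (Kc p - 1) := mul_pos_of_neg_of_neg h3 (by linarith)
  have h4 : Kc p ^ 2 * Real.cosh (Kb p ω * x) ^ Kc p ≤ Kc p ^ 2 :=
    mul_le_of_le_one_right (sq_nonneg _) hle0
  have h5 : Kc p * (Kc p - 1) * Real.cosh (Kb p ω * x) ^ (Kc p - 2) ≤ Kc p * (Kc p - 1) :=
    mul_le_of_le_one_right (le_of_lt hcc) hle2
  have h6 : 0 < Kc p * (Kc p - 1) * Real.cosh (Kb p ω * x) ^ (Kc p - 2) := mul_pos hcc hP2
  have h7 : 0 ≤ Kc p ^ 2 * Real.cosh (Kb p ω * x) ^ Kc p := mul_nonneg (sq_nonneg _) (le_of_lt hP0)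
  have hE : |Kc p ^ 2 * Real.cosh (Kb p ω * x) ^ Kc p
      - Kc p * (Kc p - 1) * Real.cosh (Kb p ω * x) ^ (Kc p - 2)|
      ≤ Kc p ^ 2 + Kc p * (Kc p - 1) := by
    rw [abs_sub_le_iff]
    constructor <;> nlinarith
  have key : |phi2 p ω x| = KA p ω * Kb p ω ^ 2 * |Kc p ^ 2 * Real.cosh (Kb p ω * x) ^ Kc p
      - Kc p * (Kc p - 1) * Real.cosh (Kb p ω * x) ^ (Kc p - 2)| := by
    simp only [phi2, abs_mul, abs_of_pos h1, abs_of_pos (pow_pos h2 2)]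
  rw [key]
  exact mul_le_mul_of_nonneg_left hE (by positivity)

lemma qfun_bound (hp : 0 < p) (hω : ω ^ 2 < 1) (x : ℝ) :
    |qfun p ω x| ≤ 1 - ω ^ 2 + (p + 1) * KA p ω ^ p := by
  have hA := hA_pos p ω hp hω
  have hApp : 0 < KA p ω ^ p := Real.rpow_pos_of_pos hA p
  have hZ0 := cosh_rpow_pos (Kb p ω * x) (-2)
  have hZ1 := cosh_rpow_le_one (Kb p ω * x) (-2) (by norm_num)
  have hω' := homega ω hω
  simp only [qfun, phi_rpow p ω hp hω]
  have hkey : (p+1) * (KA p ω ^ p * Real.cosh (Kb p ω * x) ^ (-2:ℝ)) ≤ (p+1) * KA p ω ^ p :=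
    mul_le_mul_of_nonneg_left (mul_le_of_le_one_right (le_of_lt hApp) hZ1) (by linarith)
  have hpos : 0 < (p+1) * (KA p ω ^ p * Real.cosh (Kb p ω * x) ^ (-2:ℝ)) :=
    mul_pos (by linarith) (mul_pos hApp hZ0)
  rw [abs_le]
  constructor <;> linarith
end

lemma tendsto_zero_of_sq_integrable (h : ℝ → ℝ) (hh : ContDiff ℝ 1 h)
    (h2 : Integrable (fun x => h x ^ 2))
    (h'2 : Integrable (fun x => deriv h x ^ 2)) :
    Tendsto h atTop (nhds 0) := by
  have hdiff : Differentiable ℝ h := hh.differentiable one_ne_zero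
  have hd : ∀ x, HasDerivAt h (deriv h x) x := fun x => (hdiff x).hasDerivAt
  set F : ℝ → ℝ := fun x => h x ^ 2 with hFdef
  set F' : ℝ → ℝ := fun x => 2 * h x * deriv h x with hF'def
  have hF : ∀ x, HasDerivAt F (F' x) x := by
    intro x
    have := (hd x).pow 2
    convert this using 1
    · rfl
    · rfl
    · rfl
    simp [F, F']
  have hcont' : Continuous F' := by
    have : Continuous (deriv h) := hh.continuous_deriv le_rfl
    fun_prop
  have hint : Integrable F' := by
    refine (h2.add h'2).mono hcont'.aestronglyMeasurable ?_
    filter_upwards with x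
    have h1 : |2 * h x * deriv h x| ≤ h x ^ 2 + deriv h x ^ 2 := by
      rw [abs_mul, abs_mul, abs_two]
      nlinarith [sq_abs (h x), sq_abs (deriv h x), abs_nonneg (h x),
        abs_nonneg (deriv h x), sq_nonneg (|h x| - |deriv h x|)]
    simp only [norm_eq_abs]
    calc |2 * h x * deriv h x| ≤ h x ^ 2 + deriv h x ^ 2 := h1
      _ ≤ |h x ^ 2 + deriv h x ^ 2| := le_abs_self _
  have hFeq : ∀ x : ℝ, F x = F 0 + ∫ t in (0:ℝ)..x, F' t := by
    intro x
    have := intervalIntegral.integral_eq_sub_of_hasDerivAt (a := 0) (b := x)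
      (fun t _ => hF t) hint.intervalIntegrable
    linarith [this]
  have hT : Tendsto F atTop (nhds (F 0 + ∫ t in Set.Ioi (0:ℝ), F' t)) := by
    have := MeasureTheory.intervalIntegral_tendsto_integral_Ioi 0
      hint.integrableOn tendsto_id
    have h2' : Tendsto (fun x => F 0 + ∫ t in (0:ℝ)..x, F' t) atTop
        (nhds (F 0 + ∫ t in Set.Ioi (0:ℝ), F' t)) := tendsto_const_nhds.add this
    exact h2'.congr (fun x => (hFeq x).symm)
  set L := F 0 + ∫ t in Set.Ioi (0:ℝ), F' t with hLdef
  have hL0 : L = 0 := by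
    by_contra hne
    have hLnn : 0 ≤ L := ge_of_tendsto hT (Eventually.of_forall (fun x => sq_nonneg _))
    have hLpos : 0 < L := lt_of_le_of_ne hLnn (Ne.symm hne)
    have hev : ∀ᶠ x in atTop, F x ∈ Set.Ioi (L / 2) :=
      hT (Ioi_mem_nhds (by linarith))
    obtain ⟨N, hN⟩ := eventually_atTop.mp hev
    have hconst : IntegrableOn (fun _ : ℝ => L / 2) (Set.Ioi N) := by
      refine (h2.restrict (s := Set.Ioi N)).mono aestronglyMeasurable_const ?_
      filter_upwards [ae_restrict_mem measurableSet_Ioi] with x hx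
      have := hN x (le_of_lt hx)
      simp only [norm_eq_abs]
      rw [abs_of_pos (by linarith : (0:ℝ) < L / 2)]
      calc L / 2 ≤ F x := le_of_lt this
        _ ≤ |h x ^ 2| := le_abs_self _
    rw [integrableOn_const_iff] at hconst
    rcases hconst with h | h
    · simp at h; linarith
    · simp [Real.volume_Ioi] at h
  rw [hL0] at hT
  have habs : Tendsto (fun x => Real.sqrt (F x)) atTop (nhds 0) := by
    have := (Real.continuous_sqrt.tendsto 0).comp hT
    simpa [Function.comp_def] using this
  refine squeeze_zero_norm (fun x => ?_) habs
  simp only [norm_eq_abs, F]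
  rw [Real.sqrt_sq_eq_abs]

lemma gronwall_zero (E E' : ℝ → ℝ) (hE : ∀ x, HasDerivAt E (E' x) x)
    (hpos : ∀ x, 0 ≤ E x) (K : ℝ) (hK : 0 ≤ K)
    (hbd : ∀ x, |E' x| ≤ K * E x) (h0 : E 0 = 0) : ∀ x, E x = 0 := by
  have expd : ∀ (a x : ℝ), HasDerivAt (fun y => Real.exp (a * y)) (a * Real.exp (a * x)) x := by
    intro a x
    have h1 : HasDerivAt (fun y : ℝ => a * y) a x := by
      simpa using (hasDerivAt_id x).const_mul a
    have := (Real.hasDerivAt_exp (a * x)).comp x h1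
    convert this using 1
    · rfl
    · rfl
    · rfl
    ring
  intro x
  rcases le_or_gt 0 x with hx | hx
  · -- right side: G = E * exp(-K x) is antitone
    set G : ℝ → ℝ := fun y => E y * Real.exp (-K * y) with hGdef
    have hG : ∀ y, HasDerivAt G ((E' y - K * E y) * Real.exp (-K * y)) y := by
      intro y
      have := (hE y).mul (expd (-K) y)
      convert this using 1
      · rfl
      · rfl
      · ext z; simp only [G, Pi.mul_apply]
      ring
    have hanti : Antitone G := by
      have hdiff : Differentiable ℝ G := fun y => (hG y).differentiableAt
      refine antitone_of_deriv_nonpos hdiff (fun y => ?_)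
      rw [(hG y).deriv]
      have h1 := hbd y
      rw [abs_le] at h1
      have : E' y - K * E y ≤ 0 := by linarith [h1.2]
      exact mul_nonpos_of_nonpos_of_nonneg this (le_of_lt (Real.exp_pos _))
    have h1 : G x ≤ G 0 := hanti hx
    have h2 : G 0 = 0 := by simp [G, h0]
    have h3 : 0 ≤ G x := mul_nonneg (hpos x) (le_of_lt (Real.exp_pos _))
    have h4 : G x = 0 := le_antisymm (by linarith) h3
    have := Real.exp_pos (-K * x)
    rw [hGdef] at h4
    simp only at h4
    rcases mul_eq_zero.mp h4 with h | h
    · exact h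
    · linarith
  · -- left side: H = E * exp(K x) is monotone
    set G : ℝ → ℝ := fun y => E y * Real.exp (K * y) with hGdef
    have hG : ∀ y, HasDerivAt G ((E' y + K * E y) * Real.exp (K * y)) y := by
      intro y
      have := (hE y).mul (expd K y)
      convert this using 1
      · rfl
      · rfl
      · rfl
      ring
    have hmono : Monotone G := by
      have hdiff : Differentiable ℝ G := fun y => (hG y).differentiableAt
      refine monotone_of_deriv_nonneg hdiff (fun y => ?_)
      rw [(hG y).deriv]
      have h1 := hbd y
      rw [abs_le] at h1
      have : 0 ≤ E' y + K * E y := by linarith [h1.1]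
      exact mul_nonneg this (le_of_lt (Real.exp_pos _))
    have h1 : G x ≤ G 0 := hmono (le_of_lt hx)
    have h2 : G 0 = 0 := by simp [G, h0]
    have h3 : 0 ≤ G x := mul_nonneg (hpos x) (le_of_lt (Real.exp_pos _))
    have h4 : G x = 0 := le_antisymm (by linarith) h3
    have := Real.exp_pos (K * x)
    rw [hGdef] at h4
    simp only at h4
    rcases mul_eq_zero.mp h4 with h | h
    · exact h
    · linarith


/-- Kernel of the Hessian `S_ω''(Φ_ω)`: any `H¹ × L²` pair `(f,g)` with
`-f'' + f - (p+1)φ_ω^p f + ω g = 0` and `g + ω f = 0` is a multiple of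
`∂ₓΦ_ω = (φ_ω', -ω φ_ω')`. -/
theorem kernel_of_hessian (p ω : ℝ) (hp : 0 < p) (hω1 : -1 < ω) (hω2 : ω < 1)
    (f g : ℝ → ℝ) (hf : ContDiff ℝ 2 f)
    (hfL2 : Integrable (fun x => (f x) ^ 2))
    (hf'L2 : Integrable (fun x => (deriv f x) ^ 2))
    (hgL2 : Integrable (fun x => (g x) ^ 2))
    (heq1 : ∀ x : ℝ,
      -(deriv (deriv f) x) + f x - (p + 1) * (phi p ω x) ^ p * f x + ω * g x = 0)
    (heq2 : ∀ x : ℝ, g x + ω * f x = 0) :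
    ∃ C : ℝ, f = (fun x => C * deriv (phi p ω) x) ∧
      g = (fun x => -C * ω * deriv (phi p ω) x) := by
  have hω : ω ^ 2 < 1 := by nlinarith
  have hf1 : ContDiff ℝ 1 f := hf.of_le (by norm_num)
  have hdf : ∀ x, HasDerivAt f (deriv f x) x :=
    fun x => ((hf1.differentiable one_ne_zero) x).hasDerivAt
  have hf' : ContDiff ℝ 1 (deriv f) := by
    have h2 : ContDiff ℝ (1 + 1 : WithTop ℕ∞) f := by
      have he : ((1:WithTop ℕ∞) + 1) = 2 := by norm_num
      rw [he]; exact hf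
    exact (contDiff_succ_iff_deriv.mp h2).2.2
  have hdf' : ∀ x, HasDerivAt (deriv f) (deriv (deriv f) x) x :=
    fun x => ((hf'.differentiable one_ne_zero) x).hasDerivAt
  -- second order ODE for f
  have hfpp : ∀ x, deriv (deriv f) x = qfun p ω x * f x := by
    intro x
    simp only [qfun]
    linear_combination (-1 : ℝ) * heq1 x + ω * heq2 x
  -- Wronskian is constant
  set W : ℝ → ℝ := fun x => f x * phi2 p ω x - deriv f x * phi1 p ω x with hWdef
  have hW : ∀ x, HasDerivAt W 0 x := by
    intro x
    have h := ((hdf x).mul (hasDerivAt_phi2 p ω x)).sub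
      ((hdf' x).mul (hasDerivAt_phi1 p ω x))
    convert h using 1
    · rfl
    · rfl
    · rfl
    rw [hfpp x, ode_phi1 p ω hp hω x]
    ring
  have hWconst : ∀ x, W x = W 0 := by
    intro x
    have hdiffW : Differentiable ℝ W := fun y => (hW y).differentiableAt
    have : ∀ y, deriv W y = 0 := fun y => (hW y).deriv
    exact is_const_of_deriv_eq_zero hdiffW this x 0
  -- limits at infinity
  have hfto : Tendsto f atTop (nhds 0) := tendsto_zero_of_sq_integrable f hf1 hfL2 hf'L2
  have hf''cont : Continuous (deriv (deriv f)) := hf'.continuous_deriv le_rfl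
  set Mq : ℝ := 1 - ω ^ 2 + (p + 1) * KA p ω ^ p with hMq
  have hMqpos : 0 < Mq := by
    have := homega ω hω
    have := Real.rpow_pos_of_pos (hA_pos p ω hp hω) p
    nlinarith
  have hf''L2 : Integrable (fun x => (deriv (deriv f) x) ^ 2) := by
    refine (hfL2.const_mul (Mq ^ 2)).mono
      ((hf''cont.pow 2).aestronglyMeasurable) ?_
    filter_upwards with x
    simp only [norm_eq_abs]
    rw [hfpp x]
    have h1 := qfun_bound p ω hp hω x
    rw [← hMq, abs_le] at h1
    rw [abs_of_nonneg (by positivity : (0:ℝ) ≤ Mq ^ 2 * f x ^ 2), abs_of_nonneg (sq_nonneg _)]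
    nlinarith [mul_nonneg (mul_nonneg (sub_nonneg.mpr h1.2)
      (by linarith : (0:ℝ) ≤ Mq + qfun p ω x)) (sq_nonneg (f x))]
  have hf'to : Tendsto (deriv f) atTop (nhds 0) :=
    tendsto_zero_of_sq_integrable (deriv f) hf' hf'L2 hf''L2
  -- W tends to 0 at infinity
  set M1 : ℝ := KA p ω * Kb p ω * (-Kc p) with hM1
  set M2 : ℝ := KA p ω * Kb p ω ^ 2 * (Kc p ^ 2 + Kc p * (Kc p - 1)) with hM2
  have hWto : Tendsto W atTop (nhds 0) := by
    have hrhs : Tendsto (fun x => |f x| * M2 + |deriv f x| * M1) atTop (nhds 0) := by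
      have h1 : Tendsto (fun x => |f x|) atTop (nhds 0) := by
        simpa using hfto.abs
      have h2 : Tendsto (fun x => |deriv f x|) atTop (nhds 0) := by
        simpa using hf'to.abs
      have := (h1.mul_const M2).add (h2.mul_const M1)
      simpa using this
    refine squeeze_zero_norm (fun x => ?_) hrhs
    simp only [norm_eq_abs, W]
    calc |f x * phi2 p ω x - deriv f x * phi1 p ω x|
        ≤ |f x * phi2 p ω x| + |deriv f x * phi1 p ω x| := abs_sub _ _
      _ ≤ |f x| * M2 + |deriv f x| * M1 := by
          rw [abs_mul, abs_mul]
          gcongr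
          · exact phi2_bound p ω hp hω x
          · exact phi1_bound p ω hp hω x
  have hW0 : W 0 = 0 := by
    have hconst : Tendsto W atTop (nhds (W 0)) := by
      have : W = fun _ => W 0 := funext hWconst
      rw [this]; exact tendsto_const_nhds
    exact tendsto_nhds_unique hconst hWto
  -- f 0 = 0
  have hf0 : f 0 = 0 := by
    have : W 0 = f 0 * phi2 p ω 0 := by
      simp only [W, phi1_zero, mul_zero, sub_zero]
    rw [hW0] at this
    rcases mul_eq_zero.mp this.symm with h | h
    · exact h
    · exact absurd h (phi2_zero_ne p ω hp hω)
  -- uniqueness via energy estimate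
  set C : ℝ := deriv f 0 / phi2 p ω 0 with hC
  set h : ℝ → ℝ := fun x => f x - C * phi1 p ω x with hhdef
  set h' : ℝ → ℝ := fun x => deriv f x - C * phi2 p ω x with hh'def
  have hdh : ∀ x, HasDerivAt h (h' x) x :=
    fun x => (hdf x).sub ((hasDerivAt_phi1 p ω x).const_mul C)
  have hdh' : ∀ x, HasDerivAt h' (qfun p ω x * h x) x := by
    intro x
    have := (hdf' x).sub ((hasDerivAt_phi2 p ω x).const_mul C)
    convert this using 1
    · rfl
    · rfl
    · rfl
    simp only [h]
    rw [hfpp x, ode_phi1 p ω hp hω x]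
    ring
  have hh0 : h 0 = 0 := by simp [h, hf0, phi1_zero]
  have hh'0 : h' 0 = 0 := by
    simp only [h', hC]
    rw [div_mul_cancel₀ _ (phi2_zero_ne p ω hp hω)]
    ring
  set E : ℝ → ℝ := fun x => h x ^ 2 + h' x ^ 2 with hEdef
  set E' : ℝ → ℝ := fun x => 2 * h x * h' x + 2 * h' x * (qfun p ω x * h x) with hE'def
  have hdE : ∀ x, HasDerivAt E (E' x) x := by
    intro x
    have h1 := ((hdh x).pow 2).add ((hdh' x).pow 2)
    convert h1 using 1
    · rfl
    · rfl
    · rfl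
    simp only [E']
    ring
  have hEpos : ∀ x, 0 ≤ E x := fun x => by positivity
  have hbd : ∀ x, |E' x| ≤ (1 + Mq) * E x := by
    intro x
    have hq := qfun_bound p ω hp hω x
    have habs : |2 * h x * h' x| ≤ h x ^ 2 + h' x ^ 2 := by
      rw [abs_mul, abs_mul, abs_two]
      nlinarith [sq_abs (h x), sq_abs (h' x), abs_nonneg (h x), abs_nonneg (h' x),
        sq_nonneg (|h x| - |h' x|)]
    have heq : E' x = (1 + qfun p ω x) * (2 * h x * h' x) := by simp only [E']; ring
    rw [heq, abs_mul]
    have h1q : |1 + qfun p ω x| ≤ 1 + Mq := by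
      rw [abs_le] at *
      constructor <;> [linarith [hq.1]; linarith [hq.2]]
    calc |1 + qfun p ω x| * |2 * h x * h' x|
        ≤ (1 + Mq) * (h x ^ 2 + h' x ^ 2) :=
          mul_le_mul h1q habs (abs_nonneg _) (by linarith)
      _ = (1 + Mq) * E x := rfl
  have hE0 : E 0 = 0 := by simp [E, hh0, hh'0]
  have hEzero : ∀ x, E x = 0 :=
    gronwall_zero E E' hdE hEpos (1 + Mq) (by linarith) hbd hE0
  have hfeq : ∀ x, f x = C * phi1 p ω x := by
    intro x
    have hEx := hEzero x
    simp only [E] at hEx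
    have hsq : h x ^ 2 = 0 := by nlinarith [sq_nonneg (h x), sq_nonneg (h' x)]
    have h1 : h x = 0 := by
      exact pow_eq_zero_iff (two_ne_zero) |>.mp hsq
    simp only [h] at h1
    linarith
  have hderiv_phi : ∀ x, deriv (phi p ω) x = phi1 p ω x :=
    fun x => (hasDerivAt_phi p ω x).deriv
  refine ⟨C, ?_, ?_⟩
  · funext x
    rw [hderiv_phi x]
    exact hfeq x
  · funext x
    rw [hderiv_phi x]
    linear_combination heq2 x - ω * hfeq x
end

section
/- Let 0 < p < 4 and ω² = p/4 with ω ∈ (−1,1). Define, for λ ∈ (−1,1), h₁(λ) = −2·(4/p + 1)·E(Φ_ω) − 2λ·(2(4−p)/p + 1)·Q(Φ_ω) + 2·(1 − λ²·(4−p)/p)·∫_ℝ φ_λ² dx + 2ω·( Q(Φ_λ) − Q(Φ_ω) ). Then h₁ is twice differentiable at λ = ω with h₁(ω) = 0, h₁'(ω) = 0, and h₁''(ω) = (16/p)·∫_ℝ φ_ω² dx > 0. -/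
open MeasureTheory Real Filter

/-- Momentum `Q(u,v) = ∫ u v`. -/
noncomputable def Qm (u v : ℝ → ℝ) : ℝ := ∫ x : ℝ, u x * v x

/-- Energy `E(u,v) = ½∫((∂ₓu)² + u² + v²) - (1/(p+2))∫|u|^{p+2}`. -/
noncomputable def En (p : ℝ) (u v : ℝ → ℝ) : ℝ :=
  (1 / 2) * (∫ x : ℝ, ((deriv u x) ^ 2 + (u x) ^ 2 + (v x) ^ 2))
    - (1 / (p + 2)) * ∫ x : ℝ, |u x| ^ (p + 2)

/-- The function `h₁` from the monotonicity argument. -/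
noncomputable def h1 (p ω l : ℝ) : ℝ :=
  -2 * (4 / p + 1) * En p (phi p ω) (fun x => -ω * phi p ω x)
    - 2 * l * (2 * (4 - p) / p + 1) * Qm (phi p ω) (fun x => -ω * phi p ω x)
    + 2 * (1 - l ^ 2 * (4 - p) / p) * (∫ x : ℝ, (phi p l x) ^ 2)
    + 2 * ω * (Qm (phi p l) (fun x => -l * phi p l x)
        - Qm (phi p ω) (fun x => -ω * phi p ω x))

open Set Topology

lemma integrable_of_even' (f : ℝ → ℝ) (hev : ∀ x, f (-x) = f x)
    (h : IntegrableOn f (Ioi 0)) : Integrable f := by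
  have int_Iic : IntegrableOn f (Iic 0) := by
    rw [← Measure.map_neg_eq_self (volume : Measure ℝ)]
    have m : MeasurableEmbedding fun x : ℝ => -x := (Homeomorph.neg ℝ).measurableEmbedding
    rw [m.integrableOn_map_iff]
    simp_rw [Function.comp_def, hev, neg_preimage, neg_Iic, neg_zero]
    exact (integrableOn_Ici_iff_integrableOn_Ioi).mpr h
  rw [← integrableOn_univ, ← Iic_union_Ioi (a := (0:ℝ))]
  exact int_Iic.union h

lemma cont_sech (s : ℝ) : Continuous fun x : ℝ => cosh x ^ (-s) :=
  Real.continuous_cosh.rpow_const (fun x => Or.inl (Real.cosh_pos x).ne')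

lemma integrable_sech {s : ℝ} (hs : 0 < s) : Integrable fun x : ℝ => cosh x ^ (-s) := by
  apply integrable_of_even' _ (fun x => by rw [Real.cosh_neg])
  have hg : IntegrableOn (fun x : ℝ => 2 ^ s * rexp (-s * x)) (Ioi 0) :=
    (exp_neg_integrableOn_Ioi 0 hs).const_mul _
  refine Integrable.mono hg ((cont_sech s).aestronglyMeasurable.restrict) ?_
  rw [ae_restrict_iff' measurableSet_Ioi]
  filter_upwards with x hx
  have h1 : rexp x / 2 ≤ cosh x := by
    rw [Real.cosh_eq]
    have := (Real.exp_pos (-x)).le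
    linarith
  have h2 : (0:ℝ) < rexp x / 2 := by positivity
  have hle : cosh x ^ (-s) ≤ (rexp x / 2) ^ (-s) :=
    Real.rpow_le_rpow_of_nonpos h2 h1 (by linarith)
  have heq : (rexp x / 2) ^ (-s) = 2 ^ s * rexp (-s * x) := by
    rw [Real.div_rpow (Real.exp_pos x).le (by norm_num), ← Real.exp_mul, Real.rpow_neg (by norm_num)]
    rw [mul_comm x (-s)]
    field_simp
  rw [Real.norm_eq_abs, Real.norm_eq_abs, abs_of_pos (Real.rpow_pos_of_pos (Real.cosh_pos x) _),
    abs_of_pos (by positivity)]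
  calc cosh x ^ (-s) ≤ (rexp x / 2) ^ (-s) := hle
  _ = 2 ^ s * rexp (-s * x) := heq

lemma pow_mul_rpow {c : ℝ} (hc : 0 < c) (n : ℕ) (y : ℝ) : c ^ n * c ^ y = c ^ ((n:ℝ) + y) := by
  rw [← Real.rpow_natCast c n, ← Real.rpow_add hc]

lemma abs_sinh_le_cosh_s15 (x : ℝ) : |sinh x| ≤ cosh x := by
  rw [abs_le, Real.sinh_eq, Real.cosh_eq]
  constructor <;> [nlinarith [Real.exp_pos x, Real.exp_pos (-x)];
    nlinarith [Real.exp_pos x, Real.exp_pos (-x)]]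

lemma tendsto_cosh_atTop : Tendsto Real.cosh atTop atTop := by
  apply tendsto_atTop_mono (fun x => ?_) (Real.tendsto_exp_atTop.atTop_div_const (by norm_num : (0:ℝ) < 2))
  rw [Real.cosh_eq]
  have := (Real.exp_pos (-x)).le
  linarith

lemma tendsto_cosh_atBot : Tendsto Real.cosh atBot atTop := by
  have h : Tendsto (fun x : ℝ => rexp (-x) / 2) atBot atTop :=
    (Real.tendsto_exp_atTop.comp tendsto_neg_atBot_atTop).atTop_div_const (by norm_num)
  apply tendsto_atTop_mono (fun x => ?_) h
  rw [Real.cosh_eq]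
  have := (Real.exp_pos x).le
  linarith

noncomputable def Jj (s : ℝ) : ℝ := ∫ x : ℝ, cosh x ^ (-s)

lemma Jj_pos {s : ℝ} (hs : 0 < s) : 0 < Jj s := by
  rw [Jj, integral_pos_iff_support_of_nonneg
    (fun x => (Real.rpow_pos_of_pos (Real.cosh_pos x) _).le) (integrable_sech hs)]
  have : Function.support (fun x : ℝ => cosh x ^ (-s)) = Set.univ := by
    ext x; simp [Function.mem_support, (Real.rpow_pos_of_pos (Real.cosh_pos x) (-s)).ne']
  rw [this]
  simp

lemma Jj_rec {s : ℝ} (hs : 0 < s) : Jj (s + 2) = s / (s + 1) * Jj s := by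
  set F : ℝ → ℝ := fun x => sinh x * cosh x ^ (-(s+1)) with hF
  set F' : ℝ → ℝ := fun x => -s * cosh x ^ (-s) + (s+1) * cosh x ^ (-(s+2)) with hF'
  have hderiv : ∀ x, HasDerivAt F (F' x) x := by
    intro x
    have h1 : HasDerivAt (fun x : ℝ => cosh x ^ (-(s+1)))
        (sinh x * (-(s+1)) * cosh x ^ (-(s+1) - 1)) x :=
      (Real.hasDerivAt_cosh x).rpow_const (Or.inl (Real.cosh_pos x).ne')
    have h2 := (Real.hasDerivAt_sinh x).mul h1
    refine h2.congr_deriv ?_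
    have hc := (Real.cosh_pos x).ne'
    have e1 : cosh x * cosh x ^ (-(s+1)) = cosh x ^ (-s) := by
      nth_rewrite 1 [← Real.rpow_one (cosh x)]
      rw [← Real.rpow_add (Real.cosh_pos x)]; ring_nf
    have e2 : sinh x * (sinh x * (-(s+1)) * cosh x ^ (-(s+1) - 1)) =
        -(s+1) * (sinh x ^ 2 * cosh x ^ (-(s+2))) := by
      rw [show (-(s+1) - 1 : ℝ) = -(s+2) by ring]; ring
    have e3 : sinh x ^ 2 * cosh x ^ (-(s+2)) = cosh x ^ (-s) - cosh x ^ (-(s+2)) := by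
      rw [Real.sinh_sq, sub_mul, one_mul]
      congr 1
      rw [pow_mul_rpow (Real.cosh_pos x)]
      norm_num
    rw [e1, e2, e3]
    simp only [hF']
    ring
  have hint : Integrable F' := ((integrable_sech hs).const_mul (-s)).add
    ((integrable_sech (by linarith : (0:ℝ) < s + 2)).const_mul (s+1))
  have hbound : ∀ x, ‖F x‖ ≤ cosh x ^ (-s) := by
    intro x
    rw [Real.norm_eq_abs, hF, abs_mul,
      abs_of_pos (Real.rpow_pos_of_pos (Real.cosh_pos x) _)]
    calc |sinh x| * cosh x ^ (-(s+1)) ≤ cosh x * cosh x ^ (-(s+1)) := by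
          apply mul_le_mul_of_nonneg_right (abs_sinh_le_cosh_s15 x)
            (Real.rpow_pos_of_pos (Real.cosh_pos x) _).le
      _ = cosh x ^ (-s) := by
          nth_rewrite 1 [← Real.rpow_one (cosh x)]
          rw [← Real.rpow_add (Real.cosh_pos x)]; ring_nf
  have hsech_top : Tendsto (fun x : ℝ => cosh x ^ (-s)) atTop (nhds 0) :=
    (tendsto_rpow_neg_atTop hs).comp tendsto_cosh_atTop
  have hsech_bot : Tendsto (fun x : ℝ => cosh x ^ (-s)) atBot (nhds 0) :=
    (tendsto_rpow_neg_atTop hs).comp tendsto_cosh_atBot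
  have htop : Tendsto F atTop (nhds 0) := squeeze_zero_norm hbound hsech_top
  have hbot : Tendsto F atBot (nhds 0) := squeeze_zero_norm hbound hsech_bot
  have key := integral_of_hasDerivAt_of_tendsto hderiv hint hbot htop
  rw [sub_zero] at key
  have split : ∫ x : ℝ, F' x = -s * Jj s + (s+1) * Jj (s+2) := by
    rw [hF']
    rw [integral_add ((integrable_sech hs).const_mul (-s))
      ((integrable_sech (by linarith : (0:ℝ) < s + 2)).const_mul (s+1)),
      integral_const_mul, integral_const_mul]
    rfl
  rw [split] at key
  have hs1 : s + 1 ≠ 0 := by linarith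
  field_simp
  linarith [key]

lemma sq_rpow {c : ℝ} (hc : 0 ≤ c) (y : ℝ) : (c ^ y) ^ 2 = c ^ (y * 2) := by
  rw [← Real.rpow_natCast (c ^ y) 2, ← Real.rpow_mul hc]
  norm_num

lemma integral_sech_comp {k s : ℝ} (hk : 0 < k) :
    ∫ x : ℝ, cosh (k * x) ^ (-s) = k⁻¹ * Jj s := by
  have := MeasureTheory.Measure.integral_comp_mul_left (fun y : ℝ => cosh y ^ (-s)) k
  simpa [abs_of_pos (inv_pos.mpr hk), smul_eq_mul, Jj] using this

lemma integrable_sech_comp {k s : ℝ} (hk : 0 < k) (hs : 0 < s) :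
    Integrable fun x : ℝ => cosh (k * x) ^ (-s) :=
  (integrable_sech hs).comp_mul_left' hk.ne'

section phiFacts

variable {p l : ℝ}

lemma one_sub_sq_pos (h1 : -1 < l) (h2 : l < 1) : 0 < 1 - l ^ 2 := by nlinarith

lemma phi_eq_s15 : phi p l = fun x =>
    ((p + 2) * (1 - l ^ 2) / 2) ^ (1 / p) *
      cosh (p / 2 * Real.sqrt (1 - l ^ 2) * x) ^ (-(2 / p)) := rfl

lemma k_pos (hp : 0 < p) (h1 : -1 < l) (h2 : l < 1) : 0 < p / 2 * Real.sqrt (1 - l ^ 2) := by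
  have := one_sub_sq_pos h1 h2
  positivity

lemma C_pos (hp : 0 < p) (h1 : -1 < l) (h2 : l < 1) : 0 < (p + 2) * (1 - l ^ 2) / 2 := by
  have := one_sub_sq_pos h1 h2
  positivity

lemma phi_pos (hp : 0 < p) (h1 : -1 < l) (h2 : l < 1) (x : ℝ) : 0 < phi p l x := by
  rw [phi_eq_s15]
  have := C_pos hp h1 h2 (l := l)
  exact mul_pos (Real.rpow_pos_of_pos this _)
    (Real.rpow_pos_of_pos (Real.cosh_pos _) _)

lemma phi_sq (hp : 0 < p) (h1 : -1 < l) (h2 : l < 1) (x : ℝ) : (phi p l x) ^ 2 =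
    ((p + 2) * (1 - l ^ 2) / 2) ^ (2 / p) *
      cosh (p / 2 * Real.sqrt (1 - l ^ 2) * x) ^ (-(4 / p)) := by
  rw [phi_eq_s15, mul_pow, sq_rpow (C_pos hp h1 h2).le, sq_rpow (Real.cosh_pos _).le,
    show (1 / p * 2 : ℝ) = 2 / p by ring, show (-(2 / p) * 2 : ℝ) = -(4 / p) by ring]

lemma integral_phi_sq (hp : 0 < p) (h1 : -1 < l) (h2 : l < 1) : ∫ x : ℝ, (phi p l x) ^ 2 =
    ((p + 2) * (1 - l ^ 2) / 2) ^ (2 / p) *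
      ((p / 2 * Real.sqrt (1 - l ^ 2))⁻¹ * Jj (4 / p)) := by
  simp_rw [phi_sq hp h1 h2]
  rw [MeasureTheory.integral_const_mul, integral_sech_comp (k_pos hp h1 h2)]

lemma integral_phi_rpow (hp : 0 < p) (h1 : -1 < l) (h2 : l < 1) :
    ∫ x : ℝ, |phi p l x| ^ (p + 2) =
      ((p + 2) * (1 - l ^ 2) / 2) ^ (2 / p) * ((p + 2) * (1 - l ^ 2) / 2) *
        ((p / 2 * Real.sqrt (1 - l ^ 2))⁻¹ * (4 / (4 + p) * Jj (4 / p))) := by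
  have hC := C_pos hp h1 h2 (l := l)
  have hk := k_pos hp h1 h2 (l := l)
  have hpt : ∀ x : ℝ, |phi p l x| ^ (p + 2) =
      ((p + 2) * (1 - l ^ 2) / 2) ^ (2 / p) * ((p + 2) * (1 - l ^ 2) / 2) *
        cosh (p / 2 * Real.sqrt (1 - l ^ 2) * x) ^ (-(4 / p + 2)) := by
    intro x
    rw [abs_of_pos (phi_pos hp h1 h2 x), phi_eq_s15,
      Real.mul_rpow (Real.rpow_pos_of_pos hC _).le (Real.rpow_pos_of_pos (Real.cosh_pos _) _).le,
      ← Real.rpow_mul hC.le, ← Real.rpow_mul (Real.cosh_pos _).le,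
      show (1 / p * (p + 2) : ℝ) = 2 / p + 1 by field_simp; ring,
      show (-(2 / p) * (p + 2) : ℝ) = -(4 / p + 2) by field_simp; ring,
      Real.rpow_add hC, Real.rpow_one]
  simp_rw [hpt]
  rw [MeasureTheory.integral_const_mul, integral_sech_comp hk,
    Jj_rec (by positivity : (0:ℝ) < 4 / p),
    show (4 / p / (4 / p + 1) : ℝ) = 4 / (4 + p) by
      rw [div_eq_div_iff (by positivity) (by positivity)]; field_simp]

lemma hasDerivAt_phi_s15 (hp : 0 < p) (h1 : -1 < l) (h2 : l < 1) (x : ℝ) :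
    HasDerivAt (phi p l)
      (((p + 2) * (1 - l ^ 2) / 2) ^ (1 / p) *
        (sinh (p / 2 * Real.sqrt (1 - l ^ 2) * x) * (p / 2 * Real.sqrt (1 - l ^ 2)) * (-(2 / p)) *
          cosh (p / 2 * Real.sqrt (1 - l ^ 2) * x) ^ (-(2 / p) - 1))) x := by
  set k := p / 2 * Real.sqrt (1 - l ^ 2)
  have hlin : HasDerivAt (fun x : ℝ => k * x) k x := by
    simpa using (hasDerivAt_id x).const_mul k
  have hcosh : HasDerivAt (fun x : ℝ => cosh (k * x)) (sinh (k * x) * k) x :=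
    (Real.hasDerivAt_cosh (k * x)).comp x hlin
  have hpow : HasDerivAt (fun x : ℝ => cosh (k * x) ^ (-(2 / p)))
      (sinh (k * x) * k * (-(2 / p)) * cosh (k * x) ^ (-(2 / p) - 1)) x :=
    hcosh.rpow_const (Or.inl (Real.cosh_pos _).ne')
  exact (hpow.const_mul _)

lemma deriv_phi (hp : 0 < p) (h1 : -1 < l) (h2 : l < 1) :
    deriv (phi p l) = fun x =>
      ((p + 2) * (1 - l ^ 2) / 2) ^ (1 / p) *
        (sinh (p / 2 * Real.sqrt (1 - l ^ 2) * x) * (p / 2 * Real.sqrt (1 - l ^ 2)) * (-(2 / p)) *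
          cosh (p / 2 * Real.sqrt (1 - l ^ 2) * x) ^ (-(2 / p) - 1)) :=
  funext fun x => (hasDerivAt_phi_s15 hp h1 h2 x).deriv

lemma deriv_phi_sq (hp : 0 < p) (h1 : -1 < l) (h2 : l < 1) (x : ℝ) :
    (deriv (phi p l) x) ^ 2 =
      ((p + 2) * (1 - l ^ 2) / 2) ^ (2 / p) * (4 / p ^ 2 * (p / 2 * Real.sqrt (1 - l ^ 2)) ^ 2) *
        (cosh (p / 2 * Real.sqrt (1 - l ^ 2) * x) ^ (-(4 / p)) -
          cosh (p / 2 * Real.sqrt (1 - l ^ 2) * x) ^ (-(4 / p + 2))) := by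
  have hC := C_pos hp h1 h2 (l := l)
  set k := p / 2 * Real.sqrt (1 - l ^ 2) with hkdef
  set y := k * x with hy
  rw [deriv_phi hp h1 h2]
  have e1 : (((p + 2) * (1 - l ^ 2) / 2) ^ (1 / p)) ^ 2 =
      ((p + 2) * (1 - l ^ 2) / 2) ^ (2 / p) := by
    rw [sq_rpow hC.le, show (1 / p * 2 : ℝ) = 2 / p by ring]
  have e2 : (cosh y ^ (-(2 / p) - 1)) ^ 2 = cosh y ^ (-(4 / p + 2)) := by
    rw [sq_rpow (Real.cosh_pos _).le]
    congr 1
    ring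
  have e3 : sinh y ^ 2 * cosh y ^ (-(4 / p + 2)) =
      cosh y ^ (-(4 / p)) - cosh y ^ (-(4 / p + 2)) := by
    rw [Real.sinh_sq, sub_mul, one_mul]
    congr 1
    rw [pow_mul_rpow (Real.cosh_pos _)]
    push_cast
    ring_nf
  have expand : (((p + 2) * (1 - l ^ 2) / 2) ^ (1 / p) *
      (sinh y * k * (-(2 / p)) * cosh y ^ (-(2 / p) - 1))) ^ 2 =
      (((p + 2) * (1 - l ^ 2) / 2) ^ (1 / p)) ^ 2 * (4 / p ^ 2 * k ^ 2) *
        (sinh y ^ 2 * (cosh y ^ (-(2 / p) - 1)) ^ 2) := by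
    field_simp
    ring
  rw [expand, e1, e2, e3]

lemma Qm_phi (hp : 0 < p) (c : ℝ) :
    Qm (phi p l) (fun x => c * phi p l x) = c * ∫ x : ℝ, (phi p l x) ^ 2 := by
  rw [Qm]
  simp_rw [show ∀ x : ℝ, phi p l x * (c * phi p l x) = c * (phi p l x) ^ 2 from
    fun x => by ring]
  rw [MeasureTheory.integral_const_mul]

lemma En_phi (hp : 0 < p) (h1 : -1 < l) (h2 : l < 1) :
    En p (phi p l) (fun x => -l * phi p l x) =
      (∫ x : ℝ, (phi p l x) ^ 2) *
        (1 / 2 * (1 + l ^ 2 + (1 - l ^ 2) * p / (4 + p)) - 2 * (1 - l ^ 2) / (4 + p)) := by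
  have hC := C_pos hp h1 h2 (l := l)
  have hk := k_pos hp h1 h2 (l := l)
  have hss := one_sub_sq_pos h1 h2
  set k := p / 2 * Real.sqrt (1 - l ^ 2) with hkdef
  set C := (p + 2) * (1 - l ^ 2) / 2 with hCdef
  have hk2 : k ^ 2 = p ^ 2 / 4 * (1 - l ^ 2) := by
    rw [hkdef, mul_pow, Real.sq_sqrt hss.le]; ring
  have h4p : (0:ℝ) < 4 / p := by positivity
  have h4p2 : (0:ℝ) < 4 / p + 2 := by positivity
  have hpt : (fun x : ℝ => (deriv (phi p l) x) ^ 2 + (phi p l x) ^ 2 + (-l * phi p l x) ^ 2)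
      = fun x => (C ^ (2 / p) * (4 / p ^ 2 * k ^ 2) + (1 + l ^ 2) * C ^ (2 / p)) *
          cosh (k * x) ^ (-(4 / p)) +
        (-(C ^ (2 / p) * (4 / p ^ 2 * k ^ 2))) * cosh (k * x) ^ (-(4 / p + 2)) := by
    funext x
    rw [deriv_phi_sq hp h1 h2,
      show (-l * phi p l x) ^ 2 = l ^ 2 * (phi p l x) ^ 2 by ring, phi_sq hp h1 h2]
    ring
  have hint1 : ∫ x : ℝ, ((deriv (phi p l) x) ^ 2 + (phi p l x) ^ 2 + (-l * phi p l x) ^ 2)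
      = (C ^ (2 / p) * (4 / p ^ 2 * k ^ 2) + (1 + l ^ 2) * C ^ (2 / p)) * (k⁻¹ * Jj (4 / p)) +
        (-(C ^ (2 / p) * (4 / p ^ 2 * k ^ 2))) * (k⁻¹ * (4 / (4 + p) * Jj (4 / p))) := by
    rw [hpt, MeasureTheory.integral_add (((integrable_sech_comp hk h4p).const_mul _))
      (((integrable_sech_comp hk h4p2).const_mul _)),
      MeasureTheory.integral_const_mul, MeasureTheory.integral_const_mul,
      integral_sech_comp hk, integral_sech_comp hk,
      Jj_rec h4p,
      show (4 / p / (4 / p + 1) : ℝ) = 4 / (4 + p) by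
        rw [div_eq_div_iff (by positivity) (by positivity)]; field_simp]
  rw [En, hint1, integral_phi_rpow hp h1 h2, integral_phi_sq hp h1 h2, ← hCdef, ← hkdef, hk2]
  have hp4 : (4:ℝ) + p ≠ 0 := by positivity
  have hp2 : (p:ℝ) + 2 ≠ 0 := by positivity
  field_simp
  ring

lemma integral_phi_sq_closed (hp : 0 < p) (h1 : -1 < l) (h2 : l < 1) :
    ∫ x : ℝ, (phi p l x) ^ 2 =
      (((p + 2) / 2) ^ (2 / p) * (2 / p) * Jj (4 / p)) * (1 - l ^ 2) ^ (2 / p - 1 / 2) := by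
  have hss := one_sub_sq_pos h1 h2
  have hq : (0:ℝ) < (p + 2) / 2 := by positivity
  rw [integral_phi_sq hp h1 h2,
    show ((p + 2) * (1 - l ^ 2) / 2 : ℝ) = ((p + 2) / 2) * (1 - l ^ 2) by ring,
    Real.mul_rpow hq.le hss.le,
    mul_inv, inv_div, Real.sqrt_eq_rpow, ← Real.rpow_neg_one ((1 - l ^ 2) ^ (1/2 : ℝ)),
    ← Real.rpow_mul hss.le,
    show (1 / 2 * (-1) : ℝ) = -(1/2) by ring]
  rw [show (2 / p - 1 / 2 : ℝ) = 2 / p + (-(1/2)) by ring, Real.rpow_add hss]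
  ring

end phiFacts

lemma hasDerivAt_one_sub_sq_rpow (γ : ℝ) {l : ℝ} (hl1 : -1 < l) (hl2 : l < 1) :
    HasDerivAt (fun l : ℝ => (1 - l ^ 2) ^ γ) (-2 * l * γ * (1 - l ^ 2) ^ (γ - 1)) l := by
  have hs : HasDerivAt (fun l : ℝ => 1 - l ^ 2) (-(2 * l)) l := by
    simpa using (hasDerivAt_pow 2 l).const_sub 1
  convert hs.rpow_const (Or.inl (one_sub_sq_pos hl1 hl2).ne') using 1
  ring

noncomputable def gg (A B Cc Cd K γ : ℝ) : ℝ → ℝ := fun l =>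
  A + B * l + (2 - Cc * l ^ 2 - Cd * l) * (K * (1 - l ^ 2) ^ γ)

noncomputable def gg1 (B Cc Cd K γ : ℝ) : ℝ → ℝ := fun l =>
  B + (-(2 * Cc) * l - Cd) * (K * (1 - l ^ 2) ^ γ)
    + (2 - Cc * l ^ 2 - Cd * l) * (K * (-2 * l * γ * (1 - l ^ 2) ^ (γ - 1)))

lemma hasDerivAt_gg (A B Cc Cd K γ : ℝ) {l : ℝ} (hl1 : -1 < l) (hl2 : l < 1) :
    HasDerivAt (gg A B Cc Cd K γ) (gg1 B Cc Cd K γ l) l := by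
  have hKF := (hasDerivAt_one_sub_sq_rpow γ hl1 hl2).const_mul K
  have hsq : HasDerivAt (fun l : ℝ => l ^ 2) (2 * l) l := by
    simpa using hasDerivAt_pow 2 l
  have hq : HasDerivAt (fun l : ℝ => 2 - Cc * l ^ 2 - Cd * l) (-(2 * Cc) * l - Cd) l := by
    have h1 := ((hsq.const_mul Cc).const_sub 2).sub ((hasDerivAt_id l).const_mul Cd)
    exact h1.congr_deriv (by ring)
  have hB : HasDerivAt (fun l : ℝ => B * l) B l := by
    simpa using (hasDerivAt_id l).const_mul B
  have H := ((hasDerivAt_const l A).add hB).add (hq.mul hKF)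
  refine H.congr_deriv ?_
  rw [gg1]
  ring

noncomputable def gg2 (Cc Cd K γ ω : ℝ) : ℝ :=
  (-(2 * Cc)) * (K * (1 - ω ^ 2) ^ γ)
    + (-(2 * Cc) * ω - Cd) * (K * (-2 * ω * γ * (1 - ω ^ 2) ^ (γ - 1)))
    + ((-(2 * Cc) * ω - Cd) * (K * (-2 * ω * γ * (1 - ω ^ 2) ^ (γ - 1)))
        + (2 - Cc * ω ^ 2 - Cd * ω) *
          (K * ((-2 * γ) * (1 - ω ^ 2) ^ (γ - 1)
            + (-2 * ω * γ) * (-2 * ω * (γ - 1) * (1 - ω ^ 2) ^ (γ - 1 - 1)))))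

lemma hasDerivAt_gg1 (B Cc Cd K γ : ℝ) {ω : ℝ} (hl1 : -1 < ω) (hl2 : ω < 1) :
    HasDerivAt (gg1 B Cc Cd K γ) (gg2 Cc Cd K γ ω) ω := by
  have hF := hasDerivAt_one_sub_sq_rpow γ hl1 hl2
  have hF2 := hasDerivAt_one_sub_sq_rpow (γ - 1) hl1 hl2
  have hKF := hF.const_mul K
  have hsq : HasDerivAt (fun l : ℝ => l ^ 2) (2 * ω) ω := by
    simpa using hasDerivAt_pow 2 ω
  have hq : HasDerivAt (fun l : ℝ => 2 - Cc * l ^ 2 - Cd * l) (-(2 * Cc) * ω - Cd) ω := by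
    have h1 := ((hsq.const_mul Cc).const_sub 2).sub ((hasDerivAt_id ω).const_mul Cd)
    exact h1.congr_deriv (by ring)
  have hr : HasDerivAt (fun l : ℝ => -(2 * Cc) * l - Cd) (-(2 * Cc)) ω := by
    simpa using ((hasDerivAt_id ω).const_mul (-(2 * Cc))).sub_const Cd
  have hlin : HasDerivAt (fun l : ℝ => -2 * l * γ) (-2 * γ) ω := by
    have := ((hasDerivAt_id ω).const_mul (-2 : ℝ)).mul_const γ
    simpa using this
  have hinner : HasDerivAt (fun l : ℝ => -2 * l * γ * (1 - l ^ 2) ^ (γ - 1))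
      ((-2 * γ) * (1 - ω ^ 2) ^ (γ - 1)
        + (-2 * ω * γ) * (-2 * ω * (γ - 1) * (1 - ω ^ 2) ^ (γ - 1 - 1))) ω :=
    hlin.mul hF2
  have hKinner := hinner.const_mul K
  have H := ((hasDerivAt_const ω B).add (hr.mul hKF)).add (hq.mul (hKinner))
  have hfun : gg1 B Cc Cd K γ = fun l =>
      B + ((-(2 * Cc) * l - Cd) * (K * (1 - l ^ 2) ^ γ)
        + (2 - Cc * l ^ 2 - Cd * l) * (K * (-2 * l * γ * (1 - l ^ 2) ^ (γ - 1)))) := by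
    funext y; rw [gg1]; ring
  rw [hfun]
  convert H using 1
  · rfl
  · rfl
  · funext y; simp only [Pi.add_apply, Pi.mul_apply]; ring
  · unfold gg2; ring

lemma h1_eq {p ω : ℝ} (hp : 0 < p) (hω1 : -1 < ω) (hω2 : ω < 1)
    {l : ℝ} (hl1 : -1 < l) (hl2 : l < 1) :
    h1 p ω l = gg
      (-2 * (4 / p + 1) *
          ((((p + 2) / 2) ^ (2 / p) * (2 / p) * Jj (4 / p)) * (1 - ω ^ 2) ^ (2 / p - 1 / 2) *
            (1 / 2 * (1 + ω ^ 2 + (1 - ω ^ 2) * p / (4 + p)) - 2 * (1 - ω ^ 2) / (4 + p)))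
        + 2 * ω ^ 2 *
          ((((p + 2) / 2) ^ (2 / p) * (2 / p) * Jj (4 / p)) * (1 - ω ^ 2) ^ (2 / p - 1 / 2)))
      (2 * (2 * (4 - p) / p + 1) *
        (ω * ((((p + 2) / 2) ^ (2 / p) * (2 / p) * Jj (4 / p)) * (1 - ω ^ 2) ^ (2 / p - 1 / 2))))
      (2 * (4 - p) / p) (2 * ω) (((p + 2) / 2) ^ (2 / p) * (2 / p) * Jj (4 / p))
      (2 / p - 1 / 2) l := by
  rw [h1, gg, En_phi hp hω1 hω2, Qm_phi (p := p) (l := ω) hp (-ω),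
    Qm_phi (p := p) (l := l) hp (-l),
    integral_phi_sq_closed hp hω1 hω2, integral_phi_sq_closed hp hl1 hl2]
  ring

/-- At the critical frequency `ω² = p/4`, the function `h₁` is twice
differentiable at `ω` with `h₁(ω) = 0`, `h₁'(ω) = 0` and
`h₁''(ω) = (16/p)∫φ_ω² > 0`. -/
theorem h1_properties (p ω : ℝ) (hp : 0 < p) (hp4 : p < 4)
    (hω1 : -1 < ω) (hω2 : ω < 1) (hcrit : ω ^ 2 = p / 4) :
    h1 p ω ω = 0 ∧
    HasDerivAt (h1 p ω) 0 ω ∧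
    HasDerivAt (deriv (h1 p ω)) ((16 / p) * ∫ x : ℝ, (phi p ω x) ^ 2) ω ∧
    0 < (16 / p) * ∫ x : ℝ, (phi p ω x) ^ 2 := by
  have hss : 0 < 1 - ω ^ 2 := one_sub_sq_pos hω1 hω2
  have hω0 : ω ≠ 0 := by
    intro h
    rw [h] at hcrit
    simp at hcrit
    linarith
  have hpw : p = 4 * ω ^ 2 := by rw [hcrit]; ring
  have hJp : 0 < Jj (4 / p) := Jj_pos (by positivity)
  have hKpos : 0 < ((p + 2) / 2) ^ (2 / p) * (2 / p) * Jj (4 / p) := by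
    have h2 : (0:ℝ) < ((p + 2) / 2) ^ (2 / p) := Real.rpow_pos_of_pos (by positivity) _
    positivity
  have hMpos : 0 < ∫ x : ℝ, (phi p ω x) ^ 2 := by
    rw [integral_phi_sq_closed hp hω1 hω2]
    exact mul_pos hKpos (Real.rpow_pos_of_pos hss _)
  have hXY : ((1 - ω ^ 2) : ℝ) ^ ((2 / p - 1 / 2) : ℝ)
      = (1 - ω ^ 2) * (1 - ω ^ 2) ^ ((2 / p - 1 / 2 - 1) : ℝ) := by
    nth_rewrite 1 [show (2 / p - 1 / 2 : ℝ) = 1 + (2 / p - 1 / 2 - 1) by ring]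
    rw [Real.rpow_add hss, Real.rpow_one]
  have hYZ : ((1 - ω ^ 2) : ℝ) ^ ((2 / p - 1 / 2 - 1) : ℝ)
      = (1 - ω ^ 2) * (1 - ω ^ 2) ^ ((2 / p - 1 / 2 - 1 - 1) : ℝ) := by
    nth_rewrite 1 [show (2 / p - 1 / 2 - 1 : ℝ) = 1 + (2 / p - 1 / 2 - 1 - 1) by ring]
    rw [Real.rpow_add hss, Real.rpow_one]
  have hIoo : Set.Ioo (-1:ℝ) 1 ∈ 𝓝 ω := isOpen_Ioo.mem_nhds ⟨hω1, hω2⟩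
  set Aa : ℝ := -2 * (4 / p + 1) *
          ((((p + 2) / 2) ^ (2 / p) * (2 / p) * Jj (4 / p)) * (1 - ω ^ 2) ^ (2 / p - 1 / 2) *
            (1 / 2 * (1 + ω ^ 2 + (1 - ω ^ 2) * p / (4 + p)) - 2 * (1 - ω ^ 2) / (4 + p)))
        + 2 * ω ^ 2 *
          ((((p + 2) / 2) ^ (2 / p) * (2 / p) * Jj (4 / p)) * (1 - ω ^ 2) ^ (2 / p - 1 / 2))
    with hAa
  set Bb : ℝ := 2 * (2 * (4 - p) / p + 1) *
        (ω * ((((p + 2) / 2) ^ (2 / p) * (2 / p) * Jj (4 / p)) * (1 - ω ^ 2) ^ (2 / p - 1 / 2)))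
    with hBb
  set Cc : ℝ := 2 * (4 - p) / p with hCc
  set Cd : ℝ := 2 * ω with hCd
  set Kk : ℝ := ((p + 2) / 2) ^ (2 / p) * (2 / p) * Jj (4 / p) with hKk
  set Gg : ℝ := 2 / p - 1 / 2 with hGg
  have hev : h1 p ω =ᶠ[𝓝 ω] gg Aa Bb Cc Cd Kk Gg := by
    filter_upwards [hIoo] with l hl
    exact h1_eq hp hω1 hω2 hl.1 hl.2
  refine ⟨?_, ?_, ?_, ?_⟩
  · rw [show h1 p ω ω = gg Aa Bb Cc Cd Kk Gg ω from h1_eq hp hω1 hω2 hω1 hω2,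
      hAa, hBb, hCc, hCd, hKk, hGg, gg, hXY, hpw]
    have h1' : (4:ℝ) * ω ^ 2 ≠ 0 := by positivity
    have h2' : (4:ℝ) + 4 * ω ^ 2 ≠ 0 := by positivity
    field_simp
    ring
  · have hD := (hasDerivAt_gg Aa Bb Cc Cd Kk Gg hω1 hω2).congr_of_eventuallyEq hev
    have hval : gg1 Bb Cc Cd Kk Gg ω = 0 := by
      rw [hBb, hCc, hCd, hKk, hGg, gg1, hXY, hYZ, hpw]
      have h1' : (4:ℝ) * ω ^ 2 ≠ 0 := by positivity
      field_simp
      ring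
    rw [hval] at hD
    exact hD
  · have hder : ∀ l ∈ Set.Ioo (-1:ℝ) 1, deriv (h1 p ω) l = gg1 Bb Cc Cd Kk Gg l := by
      intro l hl
      have hev' : h1 p ω =ᶠ[𝓝 l] gg Aa Bb Cc Cd Kk Gg := by
        filter_upwards [isOpen_Ioo.mem_nhds hl] with y hy
        exact h1_eq hp hω1 hω2 hy.1 hy.2
      exact ((hasDerivAt_gg Aa Bb Cc Cd Kk Gg hl.1 hl.2).congr_of_eventuallyEq hev').deriv
    have hev2 : deriv (h1 p ω) =ᶠ[𝓝 ω] gg1 Bb Cc Cd Kk Gg := by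
      filter_upwards [hIoo] with l hl
      exact hder l hl
    have h3 := (hasDerivAt_gg1 Bb Cc Cd Kk Gg hω1 hω2).congr_of_eventuallyEq hev2
    refine h3.congr_deriv (Eq.symm ?_)
    rw [integral_phi_sq_closed hp hω1 hω2]
    unfold gg2
    rw [hCc, hCd, hKk, hGg, hXY, hYZ, hpw]
    have h1' : (4:ℝ) * ω ^ 2 ≠ 0 := by positivity
    field_simp
    ring
  · have h16 : (0:ℝ) < 16 / p := by positivity
    exact mul_pos h16 hMpos
end
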